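/- Let G be an n×n row-stochastic matrix and let μ̂ ∈ ℝ^n have μ̂ᵢ > 0 for all i. Then every matrix Δ ∈ ℝ^{n×n} satisfying μ̂^⊤(G + Δ) = μ̂^⊤ obeys ∑_{i,j} |Δ_{i,j}| ≥ (∑_j |(μ̂^⊤(I − G))_j|) / (∑_i μ̂ᵢ), i.e., the component-wise ℓ1 norm of Δ is at least ‖(I − G)^⊤ μ̂‖₁ / ‖μ̂‖₁. Moreover, if μ is a stationary distribution of G, then ‖(I − G)^⊤ μ̂‖₁ = ‖(I − G)^⊤(μ̂ − μ)‖₁. -/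
import Mathlib


open Matrix BigOperators

/-- Any `Δ` with `μ̂ᵀ(G + Δ) = μ̂ᵀ` satisfies
`‖Δ‖₁ ≥ ‖(I − G)ᵀ μ̂‖₁ / ‖μ̂‖₁` (component-wise ℓ1 norm); moreover, if `μ` is a
stationary distribution of `G` then `‖(I − G)ᵀ μ̂‖₁ = ‖(I − G)ᵀ(μ̂ − μ)‖₁`. -/
theorem stmt6 {n : ℕ} (G : Matrix (Fin n) (Fin n) ℝ)
    (hGnonneg : ∀ i j, 0 ≤ G i j) (hGrow : ∀ i, ∑ j, G i j = 1)
    (μh : Fin n → ℝ) (hμhpos : ∀ i, 0 < μh i) :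
    (∀ Δ : Matrix (Fin n) (Fin n) ℝ,
      Matrix.vecMul μh (G + Δ) = μh →
      (∑ j, |Matrix.vecMul μh (1 - G) j|) / (∑ i, μh i) ≤
        ∑ i, ∑ j, |Δ i j|) ∧
    (∀ μ : Fin n → ℝ, (∀ i, 0 < μ i) → (∑ i, μ i = 1) →
      Matrix.vecMul μ G = μ →
      ∑ j, |Matrix.vecMul μh (1 - G) j| =
        ∑ j, |Matrix.vecMul (μh - μ) (1 - G) j|) := by
  constructor
  · intro Δ hΔ
    rcases Nat.eq_zero_or_pos n with hn | hn
    · subst hn; simp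
    have hS : 0 < ∑ i, μh i := by
      apply Finset.sum_pos (fun i _ => hμhpos i)
      have : Nonempty (Fin n) := ⟨⟨0, hn⟩⟩; exact Finset.univ_nonempty
    have hkey : Matrix.vecMul μh (1 - G) = Matrix.vecMul μh Δ := by
      funext j
      have h := congrFun hΔ j
      simp only [Matrix.vecMul_add, Pi.add_apply] at h
      simp only [Matrix.vecMul_sub, Matrix.vecMul_one, Pi.sub_apply]
      linarith
    rw [hkey, div_le_iff₀ hS]
    calc ∑ j, |Matrix.vecMul μh Δ j|
        ≤ ∑ j, ∑ i, |μh i * Δ i j| := by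
          apply Finset.sum_le_sum
          intro j _
          have : Matrix.vecMul μh Δ j = ∑ i, μh i * Δ i j := by
            simp [Matrix.vecMul, dotProduct]
          rw [this]
          exact Finset.abs_sum_le_sum_abs _ _
      _ = ∑ i, ∑ j, μh i * |Δ i j| := by
          rw [Finset.sum_comm]
          congr 1; funext i; congr 1; funext j
          rw [abs_mul, abs_of_pos (hμhpos i)]
      _ ≤ ∑ i, ∑ j, (∑ k, μh k) * |Δ i j| := by
          apply Finset.sum_le_sum; intro i _
          apply Finset.sum_le_sum; intro j _
          apply mul_le_mul_of_nonneg_right _ (abs_nonneg _)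
          exact Finset.single_le_sum (fun k _ => (hμhpos k).le) (Finset.mem_univ i)
      _ = (∑ i, ∑ j, |Δ i j|) * ∑ i, μh i := by
          rw [Finset.sum_mul]
          congr 1; funext i
          rw [← Finset.mul_sum, mul_comm]
  · intro μ hμpos hμsum hstat
    have : Matrix.vecMul (μh - μ) (1 - G) = Matrix.vecMul μh (1 - G) := by
      rw [Matrix.sub_vecMul]
      have : Matrix.vecMul μ (1 - G) = 0 := by
        rw [Matrix.vecMul_sub, Matrix.vecMul_one, hstat, sub_self]
      rw [this, sub_zero]
    rw [this]
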